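/- Let $a\in\{1/2,1\}$, $m=(n-1)/2-a$ for some $n\ge 4$, $p$ with $p_n<p<1+4/(n-1)$, $k$ with $2/(p-1)\le k<\min((a+m)p-1,a+m+1/p)$, $\nu=k-m-a$, and $\theta=\min((a+m)(p-1)-1,\,(k-m)p-1,\,k-m-1)$. If $k>m+1$ then $\theta>0$, and for every $\tau\le 0$: $\int_0^\infty r^{2a+2m+2p(1-m)}(1+r)^{-2p}\,(1+|\tau|+r)^{-2ap}(1+||\tau|-r|)^{-2\nu p}\,dr \leq C\,(1+|\tau|)^{-2\theta-2}$ for a constant $C$ independent of $\tau$. -/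

import Mathlib

open MeasureTheory Real

namespace Stmt18Aux

open Set

lemma aux_oneadd (γ : ℝ) (h0 : 0 < γ) (h1 : γ < 1) (Z : ℝ) (hZ : 0 ≤ Z) :
    ∫ s in (0:ℝ)..Z, (1+s)^(-γ) ≤ (1+Z)^(1-γ)/(1-γ) := by
  have h : ∀ s : ℝ, (1+s)^(-γ) = (fun u : ℝ => u ^ (-γ)) (s + 1) := by intro s; simp [add_comm]
  rw [intervalIntegral.integral_congr (fun s _ => h s),
    intervalIntegral.integral_comp_add_right (fun u : ℝ => u ^ (-γ)) 1,
    integral_rpow (Or.inl (by linarith))]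
  have h2 : (0:ℝ) ^ (-γ + 1) = 0 := by rw [Real.zero_rpow]; linarith
  rw [show (0:ℝ)+1 = 1 by ring, show Z + 1 = 1 + Z by ring, Real.one_rpow,
    show -γ + 1 = 1 - γ by ring]
  have hb : (0:ℝ) ≤ (1+Z)^(1-γ) := Real.rpow_nonneg (by linarith) _
  rw [div_le_div_iff₀ (by linarith) (by linarith)]
  nlinarith

lemma aux_cont (γ T : ℝ) : Continuous (fun r : ℝ => (1+|T - r|)^(-γ)) := by
  apply Continuous.rpow_const
  · exact continuous_const.add (continuous_const.sub continuous_id).abs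
  · intro x; left; positivity

lemma aux_ii (γ Z : ℝ) (hZ : 0 ≤ Z) :
    IntervalIntegrable (fun s : ℝ => (1+s)^(-γ)) volume 0 Z := by
  apply ContinuousOn.intervalIntegrable
  apply ContinuousOn.rpow_const (continuous_const.add continuous_id).continuousOn
  intro x hx
  rw [uIcc_of_le hZ] at hx
  exact Or.inl (by have := hx.1; show (1:ℝ) + x ≠ 0; positivity)

lemma aux_mono (γ a b Z : ℝ) (ha : 0 ≤ a) (hab : a ≤ b) (hb : b ≤ Z) :
    ∫ s in a..b, (1+s)^(-γ) ≤ ∫ s in (0:ℝ)..Z, (1+s)^(-γ) := by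
  apply intervalIntegral.integral_mono_interval ha hab hb
  · filter_upwards [ae_restrict_mem measurableSet_Ioc] with s hs
    simp only [Pi.zero_apply]
    exact Real.rpow_nonneg (by have := hs.1; positivity) _
  · exact aux_ii γ Z (ha.trans (hab.trans hb))

lemma aux2 (γ T X Y : ℝ) (h0 : 0 < γ) (h1 : γ < 1) (hX : 0 ≤ X) (hXY : X ≤ Y)
    (hTY : T ≤ Y) (hT : 0 ≤ T) :
    ∫ r in Ioc X Y, (1+|T - r|)^(-γ) ≤ 2*((1+Y)^(1-γ)/(1-γ)) := by
  have hYnn : (0:ℝ) ≤ Y := hX.trans hXY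
  have hone : ∫ s in (0:ℝ)..Y, (1+s)^(-γ) ≤ (1+Y)^(1-γ)/(1-γ) := aux_oneadd γ h0 h1 Y hYnn
  have honeg : (0:ℝ) ≤ (1+Y)^(1-γ)/(1-γ) := by
    apply div_nonneg (Real.rpow_nonneg (by linarith) _) (by linarith)
  rcases le_total T X with hTX | hTX
  · have hcg : ∫ r in Ioc X Y, (1+|T - r|)^(-γ)
        = ∫ r in Ioc X Y, ((fun s : ℝ => (1+s)^(-γ)) (r - T)) := by
      apply setIntegral_congr_fun measurableSet_Ioc
      intro r hr
      have : |T - r| = r - T := by rw [abs_sub_comm]; exact abs_of_nonneg (by linarith [hr.1])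
      simp only [this]
    rw [hcg, ← intervalIntegral.integral_of_le hXY,
      intervalIntegral.integral_comp_sub_right (fun s : ℝ => (1+s)^(-γ)) T]
    calc ∫ s in (X-T)..(Y-T), (1+s)^(-γ)
        ≤ ∫ s in (0:ℝ)..Y, (1+s)^(-γ) :=
          aux_mono γ _ _ _ (by linarith) (by linarith) (by linarith)
      _ ≤ (1+Y)^(1-γ)/(1-γ) := hone
      _ ≤ 2*((1+Y)^(1-γ)/(1-γ)) := by linarith
  · have hsplit : ∫ r in Ioc X Y, (1+|T - r|)^(-γ) =
        (∫ r in Ioc X T, (1+|T - r|)^(-γ)) + ∫ r in Ioc T Y, (1+|T - r|)^(-γ) := by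
      rw [← Ioc_union_Ioc_eq_Ioc hTX hTY]
      apply setIntegral_union (Ioc_disjoint_Ioc_of_le le_rfl) measurableSet_Ioc
      · exact ((aux_cont γ T).intervalIntegrable X T).1
      · exact ((aux_cont γ T).intervalIntegrable T Y).1
    rw [hsplit]
    have h1' : ∫ r in Ioc X T, (1+|T - r|)^(-γ) ≤ (1+Y)^(1-γ)/(1-γ) := by
      have hcg : ∫ r in Ioc X T, (1+|T - r|)^(-γ)
          = ∫ r in Ioc X T, ((fun s : ℝ => (1+s)^(-γ)) (T - r)) := by
        apply setIntegral_congr_fun measurableSet_Ioc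
        intro r hr
        have : |T - r| = T - r := abs_of_nonneg (by linarith [hr.2])
        simp only [this]
      rw [hcg, ← intervalIntegral.integral_of_le hTX,
        intervalIntegral.integral_comp_sub_left (fun s : ℝ => (1+s)^(-γ)) T]
      calc ∫ s in (T-T)..(T-X), (1+s)^(-γ)
          ≤ ∫ s in (0:ℝ)..Y, (1+s)^(-γ) :=
            aux_mono γ _ _ _ (by linarith) (by linarith) (by linarith)
        _ ≤ (1+Y)^(1-γ)/(1-γ) := hone
    have h2' : ∫ r in Ioc T Y, (1+|T - r|)^(-γ) ≤ (1+Y)^(1-γ)/(1-γ) := by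
      have hcg : ∫ r in Ioc T Y, (1+|T - r|)^(-γ)
          = ∫ r in Ioc T Y, ((fun s : ℝ => (1+s)^(-γ)) (r - T)) := by
        apply setIntegral_congr_fun measurableSet_Ioc
        intro r hr
        have : |T - r| = r - T := by rw [abs_sub_comm]; exact abs_of_nonneg (by linarith [hr.1])
        simp only [this]
      rw [hcg, ← intervalIntegral.integral_of_le hTY,
        intervalIntegral.integral_comp_sub_right (fun s : ℝ => (1+s)^(-γ)) T]
      calc ∫ s in (T-T)..(Y-T), (1+s)^(-γ)
          ≤ ∫ s in (0:ℝ)..Y, (1+s)^(-γ) :=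
            aux_mono γ _ _ _ (by linarith) (by linarith) (by linarith)
        _ ≤ (1+Y)^(1-γ)/(1-γ) := hone
    linarith

lemma aux1_int (p A M : ℝ) (hp : 0 ≤ p) (hA : -1 < A) :
    IntegrableOn (fun r : ℝ => r^A*(1+r)^(-(2*p))) (Ioc (0:ℝ) M) volume := by
  have hrA_int : IntegrableOn (fun r : ℝ => r^A) (Ioc 0 M) volume :=
    (intervalIntegral.intervalIntegrable_rpow' hA).1
  have hφ_cont : ContinuousOn (fun r : ℝ => r^A*(1+r)^(-(2*p))) (Ioc 0 M) := by
    apply ContinuousOn.mul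
    · exact continuousOn_id.rpow_const (fun x hx => Or.inl (ne_of_gt hx.1))
    · exact (continuous_const.add continuous_id).continuousOn.rpow_const
        (fun x hx => Or.inl (by have := hx.1; show (1:ℝ) + x ≠ 0; positivity))
  apply Integrable.mono' hrA_int (hφ_cont.aestronglyMeasurable measurableSet_Ioc)
  filter_upwards [ae_restrict_mem measurableSet_Ioc] with r hr
  have hr0 : (0:ℝ) < r := hr.1
  rw [Real.norm_eq_abs, abs_of_nonneg
    (mul_nonneg (Real.rpow_nonneg hr0.le _) (Real.rpow_nonneg (by positivity) _))]
  have h1 : (1+r)^(-(2*p)) ≤ 1 := by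
    calc (1+r)^(-(2*p)) ≤ (1+r)^(0:ℝ) :=
          Real.rpow_le_rpow_of_exponent_le (by linarith) (by linarith)
      _ = 1 := Real.rpow_zero _
  calc r^A * (1+r)^(-(2*p)) ≤ r^A * 1 :=
        mul_le_mul_of_nonneg_left h1 (Real.rpow_nonneg hr0.le _)
    _ = r^A := mul_one _

lemma aux1 (p A ρ M : ℝ) (hp : 0 < p) (hA : -1 < A) (hρ : 0 < ρ)
    (hAρ : A - 2*p + 1 ≤ ρ) (hM : 1 ≤ M) :
    ∫ r in Ioc (0:ℝ) M, r^A*(1+r)^(-(2*p)) ≤ 1/(A+1) + M^ρ/ρ := by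
  set φ : ℝ → ℝ := fun r => r^A*(1+r)^(-(2*p)) with hφ
  have hM0 : (0:ℝ) ≤ M := by linarith
  have hrA_int : ∀ b : ℝ, IntegrableOn (fun r : ℝ => r^A) (Ioc 0 b) volume :=
    fun b => (intervalIntegral.intervalIntegrable_rpow' hA).1
  have hφ_le : ∀ r ∈ Ioc (0:ℝ) M, φ r ≤ r^A := by
    intro r hr
    have h1 : (1+r)^(-(2*p)) ≤ 1 := by
      calc (1+r)^(-(2*p)) ≤ (1:ℝ)^(-(2*p)) :=
            Real.rpow_le_rpow_of_nonpos one_pos (by linarith [hr.1]) (by linarith)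
        _ = 1 := Real.one_rpow _
    have h2 : (0:ℝ) ≤ r^A := Real.rpow_nonneg hr.1.le _
    calc φ r ≤ r^A * 1 := mul_le_mul_of_nonneg_left h1 h2
      _ = r^A := mul_one _
  have hφ_int : IntegrableOn φ (Ioc 0 M) volume := aux1_int p A M hp.le hA
  have hsplit : ∫ r in Ioc (0:ℝ) M, φ r
      = (∫ r in Ioc (0:ℝ) 1, φ r) + ∫ r in Ioc (1:ℝ) M, φ r := by
    rw [← Ioc_union_Ioc_eq_Ioc zero_le_one hM]
    exact setIntegral_union (Ioc_disjoint_Ioc_of_le le_rfl) measurableSet_Ioc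
      (hφ_int.mono_set (Ioc_subset_Ioc_right hM)) (hφ_int.mono_set (Ioc_subset_Ioc_left zero_le_one))
  rw [hsplit]
  have hb1 : ∫ r in Ioc (0:ℝ) 1, φ r ≤ 1/(A+1) := by
    have h : ∫ r in Ioc (0:ℝ) 1, φ r ≤ ∫ r in Ioc (0:ℝ) 1, r^A := by
      apply setIntegral_mono_on (hφ_int.mono_set (Ioc_subset_Ioc_right hM)) (hrA_int 1)
        measurableSet_Ioc
      intro r hr
      exact hφ_le r ⟨hr.1, hr.2.trans hM⟩
    refine h.trans ?_
    rw [← intervalIntegral.integral_of_le zero_le_one, integral_rpow (Or.inl hA),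
      Real.one_rpow, Real.zero_rpow (by linarith)]
    rw [one_div]; simp
  have hb2 : ∫ r in Ioc (1:ℝ) M, φ r ≤ M^ρ/ρ := by
    have hmono : ∫ r in Ioc (1:ℝ) M, φ r ≤ ∫ r in Ioc (1:ℝ) M, r^(ρ-1) := by
      apply setIntegral_mono_on (hφ_int.mono_set (Ioc_subset_Ioc_left zero_le_one))
        (intervalIntegral.intervalIntegrable_rpow' (by linarith)).1 measurableSet_Ioc
      intro r hr
      have hr1 : (1:ℝ) ≤ r := hr.1.le
      have hr0 : (0:ℝ) < r := by linarith
      have h1 : (1+r)^(-(2*p)) ≤ r^(-(2*p)) :=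
        Real.rpow_le_rpow_of_nonpos hr0 (by linarith) (by linarith)
      calc φ r ≤ r^A * r^(-(2*p)) :=
            mul_le_mul_of_nonneg_left h1 (Real.rpow_nonneg hr0.le _)
        _ = r^(A + -(2*p)) := (Real.rpow_add hr0 _ _).symm
        _ ≤ r^(ρ-1) := Real.rpow_le_rpow_of_exponent_le hr1 (by linarith)
    refine hmono.trans ?_
    rw [← intervalIntegral.integral_of_le hM, integral_rpow (Or.inl (by linarith)),
      show ρ - 1 + 1 = ρ by ring, Real.one_rpow]
    have hMρ : (0:ℝ) ≤ M^ρ := Real.rpow_nonneg hM0 _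
    rw [div_le_div_iff₀ hρ hρ]
    nlinarith
  linarith

end Stmt18Aux

set_option maxHeartbeats 1000000 in
theorem stmt_18 (n : ℕ) (hn : 4 ≤ n) (a m p k ν θ : ℝ)
    (ha : a = 1 / 2 ∨ a = 1) (hm : m = ((n : ℝ) - 1) / 2 - a)
    (hp1 : ((n : ℝ) + 1) * p + 2 < ((n : ℝ) - 1) * p ^ 2)
    (hp0 : 0 < p)
    (hp2 : p < 1 + 4 / ((n : ℝ) - 1))
    (hk1 : 2 / (p - 1) ≤ k) (hk2 : k < min ((a + m) * p - 1) (a + m + 1 / p))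
    (hν : ν = k - m - a)
    (hθ : θ = min ((a + m) * (p - 1) - 1) (min ((k - m) * p - 1) (k - m - 1)))
    (hkm : m + 1 < k) :
    0 < θ ∧
    ∃ C : ℝ, 0 < C ∧ ∀ τ : ℝ, τ ≤ 0 →
      (∫ r in Set.Ioi (0:ℝ),
        r ^ (2 * a + 2 * m + 2 * p * (1 - m)) * (1 + r) ^ (-(2 * p)) *
          (1 + |τ| + r) ^ (-(2 * a * p)) * (1 + |(|τ| - r)|) ^ (-(2 * ν * p))) ≤
        C * (1 + |τ|) ^ (-2 * θ - 2) := by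
  have hn4 : (4:ℝ) ≤ (n:ℝ) := by exact_mod_cast hn
  have ha1 : (1/2:ℝ) ≤ a := by rcases ha with h|h <;> rw [h] <;> norm_num
  have ha2 : a ≤ 1 := by rcases ha with h|h <;> rw [h] <;> norm_num
  have hp_1 : 1 < p := by
    by_contra hc
    push_neg at hc
    nlinarith [mul_nonneg (show (0:ℝ) ≤ (n:ℝ)-1 by linarith)
      (mul_nonneg hp0.le (show (0:ℝ) ≤ 1 - p by linarith))]
  have hnp : ((n:ℝ)+1) < ((n:ℝ)-1)*p := by nlinarith
  have h2am : 2*a + 2*m = (n:ℝ) - 1 := by rw [hm]; ring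
  have hk2b : k < a + m + 1/p := lt_of_lt_of_le hk2 (min_le_right _ _)
  have hθ1 : θ ≤ (a+m)*(p-1) - 1 := hθ ▸ min_le_left _ _
  have hθ3 : θ ≤ k - m - 1 := hθ ▸ (min_le_right _ _).trans (min_le_right _ _)
  have h2amp : (2*a + 2*m)*p = ((n:ℝ)-1)*p := by rw [h2am]
  have hθpos : 0 < θ := by
    rw [hθ]
    apply lt_min (by linarith [hnp, h2amp, h2am])
    refine lt_min ?_ (by linarith)
    linarith [mul_pos (show (0:ℝ) < k-m-1 by linarith) (show (0:ℝ) < p-1 by linarith)]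
  have hkp : 2 ≤ k*(p-1) := by
    rw [div_le_iff₀ (by linarith : (0:ℝ) < p - 1)] at hk1; linarith
  have hν0 : 0 < ν := by rw [hν]; linarith
  have hνp1 : ν * p < 1 := by
    have h : ν < 1/p := by rw [hν]; linarith
    calc ν * p < (1/p)*p := by exact mul_lt_mul_of_pos_right h hp0
      _ = 1 := by field_simp
  have hk_eq : k = ν + m + a := by rw [hν]; ring
  have hkp2 : 2 ≤ (ν+m+a)*(p-1) := by rw [← hk_eq]; exact hkp
  have hkey : (n:ℝ) + 2 + 2*θ ≤ 2*(k*p) := by linarith [hkp, hθ3, h2am, ha2]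
  have hkp_eq : k * p = ν*p + m*p + a*p := by rw [hk_eq]; ring
  have hp2' : p*((n:ℝ)-1) < (n:ℝ)+3 := by
    have h3 : (0:ℝ) < (n:ℝ)-1 := by linarith
    have h4 : p - 1 < 4/((n:ℝ)-1) := by linarith
    have := (lt_div_iff₀ h3).1 h4
    nlinarith
  have hA : -1 < 2 * a + 2 * m + 2 * p * (1 - m) := by
    have hpa : 0 ≤ p*(2*a-1) := mul_nonneg hp0.le (by linarith)
    have h2 : p*((n:ℝ)-1) < (n:ℝ)+3 := hp2'
    rw [hm]; linarith [hpa, hp_1, h2]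
  -- Q, ρ
  set Q := 2*((k-m)*p) - 2*θ - 2 with hQ_def
  have hQpos : 0 < Q := by
    linarith [mul_pos (show (0:ℝ) < k-m-1 by linarith) (show (0:ℝ) < p-1 by linarith), hθ3]
  have hQA : (2 * a + 2 * m + 2 * p * (1 - m)) - 2*p + 1 ≤ Q := by
    rw [hQ_def]; linarith [hkey, h2am]
  -- γ facts
  have hq1 : 2*θ + 3 - 2*((a+m)*(p-1)) ≤ 2*ν*p - 1 := by linarith [hθ3, hk_eq, hkp2, ha2]
  have hγ0 : 0 < min (2*ν*p) (max (2*θ + 3 - 2*((a+m)*(p-1))) (1/2)) := by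
    apply lt_min (by positivity)
    exact lt_of_lt_of_le (by norm_num) (le_max_right _ _)
  have hγ1 : min (2*ν*p) (max (2*θ + 3 - 2*((a+m)*(p-1))) (1/2)) < 1 :=
    lt_of_le_of_lt (min_le_right _ _) (max_lt (by linarith) (by norm_num))
  have hγq : 2*θ + 3 - 2*((a+m)*(p-1)) ≤ min (2*ν*p) (max (2*θ + 3 - 2*((a+m)*(p-1))) (1/2)) :=
    le_min (by linarith) (le_max_left _ _)
  -- E facts
  have hE1 : (2 * a + 2 * m + 2 * p * (1 - m)) + -(2*p) + -(2*a*p) + -(2*ν*p) + 1 ≤ -2*θ - 2 := by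
    linarith [hkey, hkp_eq, h2am]
  refine ⟨hθpos, ?_⟩
  set A := 2 * a + 2 * m + 2 * p * (1 - m) with hA_def
  have hApos : 0 < A + 1 := by linarith
  set ρ := max (min Q 1) (A - 2*p + 1) with hρ_def
  have hρpos : 0 < ρ := lt_of_lt_of_le (lt_min hQpos one_pos) (le_max_left _ _)
  have hρQ : ρ ≤ Q := max_le (min_le_left _ _) hQA
  have hρA : A - 2*p + 1 ≤ ρ := le_max_right _ _
  set γ := min (2*ν*p) (max (2*θ + 3 - 2*((a+m)*(p-1))) (1/2)) with hγ_def
  have hγν : γ ≤ 2*ν*p := min_le_left _ _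
  set E := A + -(2*p) + -(2*a*p) + -(2*ν*p) with hE_def
  have hE1' : E + 1 ≤ -2*θ - 2 := hE1
  have hE2 : E < -1 := by linarith [hθpos]
  have hP1 : ρ + -(2*a*p) + -(2*ν*p) ≤ -2*θ - 2 := by
    rw [hQ_def] at hρQ; linarith [hkp_eq]
  have hP2 : A + -(2*p) + -(2*a*p) + (1-γ) ≤ -2*θ - 2 := by
    rw [hA_def]; linarith [hγq]
  have hap0 : (0:ℝ) ≤ a*p := mul_nonneg (by linarith) hp0.le
  have hνp0 : (0:ℝ) ≤ ν*p := mul_nonneg hν0.le hp0.le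
  set c1 := (2:ℝ)^(2*ν*p) * (1/(A+1) + 1/ρ) with hc1_def
  set c2 := (2:ℝ)^|A| * (2:ℝ)^(2*p) * (6/(1-γ)) with hc2_def
  set c3 := (2:ℝ)^(2*ν*p) * (1/(-(E+1))) with hc3_def
  have h2νp : (0:ℝ) < (2:ℝ)^(2*ν*p) := Real.rpow_pos_of_pos two_pos _
  have hc1p : 0 < c1 := mul_pos h2νp (add_pos (one_div_pos.2 hApos) (one_div_pos.2 hρpos))
  have hc2p : 0 < c2 := by
    apply mul_pos (mul_pos (Real.rpow_pos_of_pos two_pos _) (Real.rpow_pos_of_pos two_pos _))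
    apply div_pos (by norm_num) (by linarith)
  have hc3p : 0 < c3 := mul_pos h2νp (one_div_pos.2 (by linarith))
  refine ⟨c1+c2+c3, by linarith, ?_⟩
  intro τ _
  set T := |τ| with hT_def
  have hT0 : 0 ≤ T := abs_nonneg τ
  have h1T : (0:ℝ) < 1 + T := by linarith
  have h1T1 : (1:ℝ) ≤ 1 + T := by linarith
  set X := (1+T)/2 with hX_def
  set Y := 2*(1+T) with hY_def
  have hX0 : 0 < X := by rw [hX_def]; linarith
  have hXY : X ≤ Y := by rw [hX_def, hY_def]; linarith
  have hTY : T ≤ Y := by rw [hY_def]; linarith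
  have hY0 : 0 < Y := lt_of_lt_of_le hX0 hXY
  set g : ℝ → ℝ := fun r => r ^ A * (1 + r) ^ (-(2 * p)) * (1 + T + r) ^ (-(2 * a * p)) *
    (1 + |T - r|) ^ (-(2 * ν * p)) with hg_def
  show ∫ r in Set.Ioi (0:ℝ), g r ≤ (c1+c2+c3) * (1+T)^(-2*θ-2)
  have hRHS0 : 0 ≤ (c1+c2+c3) * (1+T)^(-2*θ-2) :=
    mul_nonneg (by linarith) (Real.rpow_nonneg h1T.le _)
  by_cases hInt : IntegrableOn g (Set.Ioi 0) volume
  swap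
  · rw [MeasureTheory.integral_undef hInt]; exact hRHS0
  have hI1 : IntegrableOn g (Set.Ioc 0 X) volume := hInt.mono_set Set.Ioc_subset_Ioi_self
  have hIX : IntegrableOn g (Set.Ioi X) volume := hInt.mono_set (Set.Ioi_subset_Ioi hX0.le)
  have hI2 : IntegrableOn g (Set.Ioc X Y) volume := hIX.mono_set Set.Ioc_subset_Ioi_self
  have hI3 : IntegrableOn g (Set.Ioi Y) volume := hIX.mono_set (Set.Ioi_subset_Ioi hXY)
  have hsplit : ∫ r in Set.Ioi (0:ℝ), g r =
      (∫ r in Set.Ioc 0 X, g r) + ((∫ r in Set.Ioc X Y, g r) + ∫ r in Set.Ioi Y, g r) := by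
    rw [show Set.Ioi (0:ℝ) = Set.Ioc 0 X ∪ Set.Ioi X from (Set.Ioc_union_Ioi_eq_Ioi hX0.le).symm,
      MeasureTheory.setIntegral_union Set.Ioc_disjoint_Ioi_same measurableSet_Ioi hI1 hIX]
    congr 1
    rw [show Set.Ioi X = Set.Ioc X Y ∪ Set.Ioi Y from (Set.Ioc_union_Ioi_eq_Ioi hXY).symm,
      MeasureTheory.setIntegral_union Set.Ioc_disjoint_Ioi_same measurableSet_Ioi hI2 hI3]
  have hb1 : (∫ r in Set.Ioc (0:ℝ) X, g r) ≤ c1 * (1+T)^(-2*θ-2) := by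
    set cc := (1+T)^(-(2*a*p)) * ((1+T)/2)^(-(2*ν*p)) with hcc_def
    have hXhalf0 : (0:ℝ) < (1+T)/2 := by linarith
    have hcc0 : 0 ≤ cc := mul_nonneg (Real.rpow_nonneg h1T.le _) (Real.rpow_nonneg hXhalf0.le _)
    set M := max 1 X with hM_def
    have hM1 : (1:ℝ) ≤ M := le_max_left _ _
    have hMT : M ≤ 1 + T := max_le h1T1 (by rw [hX_def]; linarith)
    have hφint : IntegrableOn (fun r : ℝ => r^A*(1+r)^(-(2*p))) (Set.Ioc 0 M) volume :=
      Stmt18Aux.aux1_int p A M hp0.le hA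
    have hpt : ∀ r ∈ Set.Ioc (0:ℝ) X, g r ≤ (fun r : ℝ => r^A*(1+r)^(-(2*p))) r * cc := by
      intro r hr
      have hr0 : 0 < r := hr.1
      have hbase : 0 ≤ r^A * (1+r)^(-(2*p)) :=
        mul_nonneg (Real.rpow_nonneg hr0.le _) (Real.rpow_nonneg (by linarith) _)
      have hf2 : (1+T+r)^(-(2*a*p)) ≤ (1+T)^(-(2*a*p)) :=
        Real.rpow_le_rpow_of_nonpos h1T (by linarith) (by linarith [hap0])
      have hXle : (1+T)/2 ≤ 1 + |T - r| := by
        have hrX : r ≤ (1+T)/2 := by have := hr.2; rw [hX_def] at this; exact this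
        rcases le_total r T with h|h
        · rw [abs_of_nonneg (by linarith)]; linarith
        · rw [abs_of_nonpos (by linarith)]; linarith
      have hf3 : (1+|T - r|)^(-(2*ν*p)) ≤ ((1+T)/2)^(-(2*ν*p)) :=
        Real.rpow_le_rpow_of_nonpos hXhalf0 hXle (by linarith [hνp0])
      have hprod : (1+T+r)^(-(2*a*p)) * (1+|T - r|)^(-(2*ν*p)) ≤ cc := by
        rw [hcc_def]
        exact mul_le_mul hf2 hf3 (Real.rpow_nonneg (by positivity) _) (Real.rpow_nonneg h1T.le _)
      calc g r = (r^A * (1+r)^(-(2*p))) * ((1+T+r)^(-(2*a*p)) * (1+|T - r|)^(-(2*ν*p))) :=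
            mul_assoc _ _ _
        _ ≤ (r^A * (1+r)^(-(2*p))) * cc := mul_le_mul_of_nonneg_left hprod hbase
    have hmono := MeasureTheory.setIntegral_mono_on hI1
      ((hφint.mono_set (Set.Ioc_subset_Ioc_right (le_max_right 1 X))).mul_const cc)
      measurableSet_Ioc hpt
    have hval : ∫ r in Set.Ioc (0:ℝ) X, (fun r : ℝ => r^A*(1+r)^(-(2*p))) r * cc
        = (∫ r in Set.Ioc (0:ℝ) X, r^A*(1+r)^(-(2*p))) * cc :=
      MeasureTheory.integral_mul_const cc _
    have hmset : ∫ r in Set.Ioc (0:ℝ) X, r^A*(1+r)^(-(2*p))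
        ≤ ∫ r in Set.Ioc (0:ℝ) M, r^A*(1+r)^(-(2*p)) := by
      apply MeasureTheory.setIntegral_mono_set hφint ?_
        ((Set.Ioc_subset_Ioc_right (le_max_right 1 X)).eventuallyLE)
      filter_upwards [ae_restrict_mem measurableSet_Ioc] with r hr
      exact mul_nonneg (Real.rpow_nonneg hr.1.le _)
        (Real.rpow_nonneg (by linarith [hr.1] : (0:ℝ) ≤ 1+r) _)
    have haux1 := Stmt18Aux.aux1 p A ρ M hp0 hA hρpos hρA hM1
    have hMρ : M^ρ ≤ (1+T)^ρ := Real.rpow_le_rpow (by linarith) hMT hρpos.le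
    have h1Tρ : (1:ℝ) ≤ (1+T)^ρ := Real.one_le_rpow h1T1 hρpos.le
    have hsum : 1/(A+1) + M^ρ/ρ ≤ (1/(A+1) + 1/ρ) * (1+T)^ρ := by
      have t1 : 1/(A+1) ≤ 1/(A+1) * (1+T)^ρ :=
        le_mul_of_one_le_right (one_div_nonneg.mpr hApos.le) h1Tρ
      have t2 : M^ρ/ρ ≤ (1+T)^ρ/ρ := (div_le_div_iff_of_pos_right hρpos).2 hMρ
      have t3 : (1+T)^ρ/ρ = 1/ρ * (1+T)^ρ := by ring
      linarith
    have hcc_eq : cc = (1+T)^(-(2*a*p)) * ((1+T)^(-(2*ν*p)) * (2:ℝ)^(2*ν*p)) := by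
      rw [hcc_def, Real.div_rpow h1T.le (by norm_num : (0:ℝ) ≤ 2),
        Real.rpow_neg (by norm_num : (0:ℝ) ≤ 2) (2*ν*p), div_inv_eq_mul]
    have e4 : (1+T)^ρ * ((1+T)^(-(2*a*p)) * (1+T)^(-(2*ν*p)))
        = (1+T)^(ρ + -(2*a*p) + -(2*ν*p)) := by
      rw [Real.rpow_add h1T (ρ + -(2*a*p)) (-(2*ν*p)), Real.rpow_add h1T ρ (-(2*a*p))]
      exact (mul_assoc _ _ _).symm
    calc ∫ r in Set.Ioc (0:ℝ) X, g r
        ≤ ∫ r in Set.Ioc (0:ℝ) X, (fun r : ℝ => r^A*(1+r)^(-(2*p))) r * cc := hmono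
      _ = (∫ r in Set.Ioc (0:ℝ) X, r^A*(1+r)^(-(2*p))) * cc := hval
      _ ≤ (1/(A+1) + M^ρ/ρ) * cc := mul_le_mul_of_nonneg_right (hmset.trans haux1) hcc0
      _ ≤ ((1/(A+1) + 1/ρ) * (1+T)^ρ) * cc := mul_le_mul_of_nonneg_right hsum hcc0
      _ = c1 * ((1+T)^ρ * ((1+T)^(-(2*a*p)) * (1+T)^(-(2*ν*p)))) := by
          rw [hcc_eq, hc1_def]; ring
      _ = c1 * (1+T)^(ρ + -(2*a*p) + -(2*ν*p)) := by rw [e4]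
      _ ≤ c1 * (1+T)^(-2*θ-2) :=
          mul_le_mul_of_nonneg_left (Real.rpow_le_rpow_of_exponent_le h1T1 hP1) hc1p.le
  have hb2 : (∫ r in Set.Ioc X Y, g r) ≤ c2 * (1+T)^(-2*θ-2) := by
    set cB := (2:ℝ)^|A| * (1+T)^A * ((2:ℝ)^(2*p) * (1+T)^(-(2*p))) * (1+T)^(-(2*a*p)) with hcB_def
    have h02 : (0:ℝ) ≤ 2 := by norm_num
    have hcB0 : 0 ≤ cB :=
      mul_nonneg (mul_nonneg (mul_nonneg (Real.rpow_nonneg h02 _) (Real.rpow_nonneg h1T.le _))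
        (mul_nonneg (Real.rpow_nonneg h02 _) (Real.rpow_nonneg h1T.le _)))
        (Real.rpow_nonneg h1T.le _)
    have hpt : ∀ r ∈ Set.Ioc X Y, g r ≤ cB * (1+|T - r|)^(-γ) := by
      intro r hr
      have hr0 : 0 < r := lt_trans hX0 hr.1
      have f1 : r^A ≤ (2:ℝ)^|A| * (1+T)^A := by
        rcases le_or_gt 0 A with hA0|hA0
        · calc r^A ≤ Y^A := Real.rpow_le_rpow hr0.le hr.2 hA0
            _ = (2:ℝ)^A * (1+T)^A := by
                rw [hY_def, Real.mul_rpow (by norm_num : (0:ℝ) ≤ 2) h1T.le]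
            _ ≤ (2:ℝ)^|A| * (1+T)^A :=
                mul_le_mul_of_nonneg_right
                  (Real.rpow_le_rpow_of_exponent_le one_le_two (le_abs_self A))
                  (Real.rpow_nonneg h1T.le _)
        · calc r^A ≤ X^A := Real.rpow_le_rpow_of_nonpos hX0 hr.1.le hA0.le
            _ = (2:ℝ)^(-A) * (1+T)^A := by
                rw [hX_def, Real.div_rpow h1T.le (by norm_num : (0:ℝ) ≤ 2),
                  Real.rpow_neg (by norm_num : (0:ℝ) ≤ 2) A, div_eq_mul_inv]
                exact mul_comm _ _
            _ ≤ (2:ℝ)^|A| * (1+T)^A :=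
                mul_le_mul_of_nonneg_right
                  (Real.rpow_le_rpow_of_exponent_le one_le_two (neg_le_abs A))
                  (Real.rpow_nonneg h1T.le _)
      have f2 : (1+r)^(-(2*p)) ≤ (2:ℝ)^(2*p) * (1+T)^(-(2*p)) := by
        calc (1+r)^(-(2*p)) ≤ X^(-(2*p)) :=
              Real.rpow_le_rpow_of_nonpos hX0 (by linarith [hr.1]) (by linarith)
          _ = (2:ℝ)^(2*p) * (1+T)^(-(2*p)) := by
              rw [hX_def, Real.div_rpow h1T.le (by norm_num : (0:ℝ) ≤ 2),
                Real.rpow_neg (by norm_num : (0:ℝ) ≤ 2) (2*p), div_inv_eq_mul]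
              exact mul_comm _ _
      have f3 : (1+T+r)^(-(2*a*p)) ≤ (1+T)^(-(2*a*p)) :=
        Real.rpow_le_rpow_of_nonpos h1T (by linarith) (by linarith [hap0])
      have f4 : (1+|T - r|)^(-(2*ν*p)) ≤ (1+|T - r|)^(-γ) :=
        Real.rpow_le_rpow_of_exponent_le (by linarith [abs_nonneg (T - r)])
          (by linarith [hγν])
      have n1 : (0:ℝ) ≤ (2:ℝ)^|A| * (1+T)^A :=
        mul_nonneg (Real.rpow_nonneg (by norm_num) _) (Real.rpow_nonneg h1T.le _)
      have s1 : r^A * (1+r)^(-(2*p)) ≤ (2:ℝ)^|A| * (1+T)^A * ((2:ℝ)^(2*p) * (1+T)^(-(2*p))) :=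
        mul_le_mul f1 f2 (Real.rpow_nonneg (by linarith) _) n1
      have n2 : (0:ℝ) ≤ (2:ℝ)^|A| * (1+T)^A * ((2:ℝ)^(2*p) * (1+T)^(-(2*p))) :=
        mul_nonneg n1 (mul_nonneg (Real.rpow_nonneg (by norm_num) _) (Real.rpow_nonneg h1T.le _))
      have s2 : r^A * (1+r)^(-(2*p)) * (1+T+r)^(-(2*a*p)) ≤
          (2:ℝ)^|A| * (1+T)^A * ((2:ℝ)^(2*p) * (1+T)^(-(2*p))) * (1+T)^(-(2*a*p)) :=
        mul_le_mul s1 f3 (Real.rpow_nonneg (by linarith) _) n2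
      exact mul_le_mul s2 f4 (Real.rpow_nonneg (by positivity) _) hcB0
    have hψint : IntegrableOn (fun r : ℝ => cB * (1+|T - r|)^(-γ)) (Set.Ioc X Y) volume :=
      (((Stmt18Aux.aux_cont γ T).intervalIntegrable X Y).1).const_mul cB
    have hmono := MeasureTheory.setIntegral_mono_on hI2 hψint measurableSet_Ioc hpt
    have hval : ∫ r in Set.Ioc X Y, cB * (1+|T - r|)^(-γ)
        = cB * ∫ r in Set.Ioc X Y, (1+|T - r|)^(-γ) := MeasureTheory.integral_const_mul cB _
    have haux2 := Stmt18Aux.aux2 γ T X Y hγ0 hγ1 hX0.le hXY hTY hT0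
    have h1γ0 : (0:ℝ) ≤ 1 - γ := by linarith
    have hYT : (1+Y)^(1-γ) ≤ 3*(1+T)^(1-γ) := by
      calc (1+Y)^(1-γ) ≤ (3*(1+T))^(1-γ) :=
            Real.rpow_le_rpow (by linarith) (by rw [hY_def]; linarith) h1γ0
        _ = (3:ℝ)^(1-γ) * (1+T)^(1-γ) := Real.mul_rpow (by norm_num) h1T.le
        _ ≤ 3 * (1+T)^(1-γ) := by
            apply mul_le_mul_of_nonneg_right ?_ (Real.rpow_nonneg h1T.le _)
            calc (3:ℝ)^(1-γ) ≤ (3:ℝ)^(1:ℝ) :=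
                  Real.rpow_le_rpow_of_exponent_le (by norm_num) (by linarith)
              _ = 3 := Real.rpow_one 3
    have hstep : cB * (2*((1+Y)^(1-γ)/(1-γ))) ≤ c2 * (1+T)^(-2*θ-2) := by
      have e3 : cB * (2*((3*(1+T)^(1-γ))/(1-γ)))
          = c2 * ((1+T)^A * (1+T)^(-(2*p)) * (1+T)^(-(2*a*p)) * (1+T)^(1-γ)) := by
        rw [hcB_def, hc2_def]; ring
      have e4 : (1+T)^A * (1+T)^(-(2*p)) * (1+T)^(-(2*a*p)) * (1+T)^(1-γ)
          = (1+T)^(A + -(2*p) + -(2*a*p) + (1-γ)) := by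
        rw [Real.rpow_add h1T (A + -(2*p) + -(2*a*p)) (1-γ),
          Real.rpow_add h1T (A + -(2*p)) (-(2*a*p)), Real.rpow_add h1T A (-(2*p))]
      calc cB * (2*((1+Y)^(1-γ)/(1-γ)))
          ≤ cB * (2*((3*(1+T)^(1-γ))/(1-γ))) := by
            apply mul_le_mul_of_nonneg_left ?_ hcB0
            apply mul_le_mul_of_nonneg_left ?_ (by norm_num)
            exact (div_le_div_iff_of_pos_right (by linarith)).2 hYT
        _ = c2 * ((1+T)^A * (1+T)^(-(2*p)) * (1+T)^(-(2*a*p)) * (1+T)^(1-γ)) := e3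
        _ = c2 * (1+T)^(A + -(2*p) + -(2*a*p) + (1-γ)) := by rw [e4]
        _ ≤ c2 * (1+T)^(-2*θ-2) :=
            mul_le_mul_of_nonneg_left (Real.rpow_le_rpow_of_exponent_le h1T1 hP2) hc2p.le
    calc ∫ r in Set.Ioc X Y, g r ≤ ∫ r in Set.Ioc X Y, cB * (1+|T - r|)^(-γ) := hmono
      _ = cB * ∫ r in Set.Ioc X Y, (1+|T - r|)^(-γ) := hval
      _ ≤ cB * (2*((1+Y)^(1-γ)/(1-γ))) := mul_le_mul_of_nonneg_left haux2 hcB0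
      _ ≤ c2 * (1+T)^(-2*θ-2) := hstep
  have hb3 : (∫ r in Set.Ioi Y, g r) ≤ c3 * (1+T)^(-2*θ-2) := by
    have hpt : ∀ r ∈ Set.Ioi Y, g r ≤ (2:ℝ)^(2*ν*p) * r^E := by
      intro r hr
      have hrY : Y < r := hr
      have hrY' : 2*(1+T) < r := by rw [hY_def] at hrY; exact hrY
      have hr0 : 0 < r := lt_trans hY0 hrY
      have f1 : (1+r)^(-(2*p)) ≤ r^(-(2*p)) :=
        Real.rpow_le_rpow_of_nonpos hr0 (by linarith) (by linarith)
      have f2 : (1+T+r)^(-(2*a*p)) ≤ r^(-(2*a*p)) :=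
        Real.rpow_le_rpow_of_nonpos hr0 (by linarith) (by linarith [hap0])
      have f3 : (1+|T-r|)^(-(2*ν*p)) ≤ (r/2)^(-(2*ν*p)) := by
        apply Real.rpow_le_rpow_of_nonpos (by linarith) ?_ (by linarith [hνp0])
        have habs : |T - r| = r - T := by
          rw [abs_sub_comm]; exact abs_of_nonneg (by linarith)
        rw [habs]; linarith
      have hA0 : 0 ≤ r^A := Real.rpow_nonneg hr0.le _
      have step : g r ≤ r^A * r^(-(2*p)) * r^(-(2*a*p)) * (r/2)^(-(2*ν*p)) := by
        have s1 : r^A * (1+r)^(-(2*p)) ≤ r^A * r^(-(2*p)) := mul_le_mul_of_nonneg_left f1 hA0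
        have s2 : r^A * (1+r)^(-(2*p)) * (1+T+r)^(-(2*a*p)) ≤ r^A * r^(-(2*p)) * r^(-(2*a*p)) :=
          mul_le_mul s1 f2 (Real.rpow_nonneg (by linarith) _)
            (mul_nonneg hA0 (Real.rpow_nonneg hr0.le _))
        exact mul_le_mul s2 f3 (Real.rpow_nonneg (by positivity) _)
          (mul_nonneg (mul_nonneg hA0 (Real.rpow_nonneg hr0.le _)) (Real.rpow_nonneg hr0.le _))
      refine step.trans (le_of_eq ?_)
      have e1 : (r/2)^(-(2*ν*p)) = (2:ℝ)^(2*ν*p) * r^(-(2*ν*p)) := by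
        rw [Real.div_rpow hr0.le (by norm_num : (0:ℝ) ≤ 2),
          Real.rpow_neg (by norm_num : (0:ℝ) ≤ 2) (2*ν*p), div_inv_eq_mul]
        exact mul_comm _ _
      have e2 : r^A * r^(-(2*p)) * r^(-(2*a*p)) * r^(-(2*ν*p)) = r^E := by
        rw [hE_def, Real.rpow_add hr0 (A + -(2*p) + -(2*a*p)) (-(2*ν*p)),
          Real.rpow_add hr0 (A + -(2*p)) (-(2*a*p)), Real.rpow_add hr0 A (-(2*p))]
      rw [e1, ← e2]; ring
    have hbint : IntegrableOn (fun r : ℝ => (2:ℝ)^(2*ν*p) * r^E) (Set.Ioi Y) volume :=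
      (integrableOn_Ioi_rpow_of_lt hE2 hY0).const_mul _
    have hmono := MeasureTheory.setIntegral_mono_on hI3 hbint measurableSet_Ioi hpt
    have hval : ∫ r in Set.Ioi Y, (2:ℝ)^(2*ν*p) * r^E = (2:ℝ)^(2*ν*p) * (-Y^(E+1)/(E+1)) := by
      rw [MeasureTheory.integral_const_mul, integral_Ioi_rpow_of_lt hE2 hY0]
    have hYE : Y^(E+1) ≤ (1+T)^(-2*θ-2) := by
      rw [hY_def, Real.mul_rpow (by norm_num : (0:ℝ) ≤ 2) h1T.le]
      calc (2:ℝ)^(E+1) * (1+T)^(E+1) ≤ 1 * (1+T)^(E+1) :=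
            mul_le_mul_of_nonneg_right
              (Real.rpow_le_one_of_one_le_of_nonpos one_le_two (by linarith))
              (Real.rpow_nonneg h1T.le _)
        _ = (1+T)^(E+1) := one_mul _
        _ ≤ (1+T)^(-2*θ-2) := Real.rpow_le_rpow_of_exponent_le h1T1 hE1'
    have hEne : E + 1 ≠ 0 := ne_of_lt (by linarith)
    have h5 : (2:ℝ)^(2*ν*p) * (-Y^(E+1)/(E+1)) = c3 * Y^(E+1) := by
      rw [hc3_def, one_div, inv_neg, neg_div, div_eq_mul_inv, mul_neg, mul_neg, neg_mul,
        mul_comm (Y^(E+1)) ((E+1)⁻¹), ← mul_assoc]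
    refine hmono.trans ?_
    rw [hval, h5]
    exact mul_le_mul_of_nonneg_left hYE hc3p.le
  rw [hsplit]
  calc (∫ r in Set.Ioc (0:ℝ) X, g r) + ((∫ r in Set.Ioc X Y, g r) + ∫ r in Set.Ioi Y, g r)
      ≤ c1 * (1+T)^(-2*θ-2) + (c2 * (1+T)^(-2*θ-2) + c3 * (1+T)^(-2*θ-2)) :=
        add_le_add hb1 (add_le_add hb2 hb3)
    _ = (c1+c2+c3) * (1+T)^(-2*θ-2) := by ring
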